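/- Suppose A is commutative. Then there is a k-module isomorphism H₁((A,B,ε);A) ≅ Ω¹_{A/B}, where A is regarded as a B-algebra via ε; the isomorphism sends the class of x⊗a to x·d(a). -/

import Mathlib

/-!
STATEMENT 7: Suppose A is commutative.  Then there is a k-module isomorphism
H₁((A,B,ε);A) ≅ Ω¹_{A/B}, where A is regarded as a B-algebra via ε; the isomorphism
sends the class of x⊗a to x·d(a).

Here (A,B,ε) is a commutative triple over a commutative ring k: the B-algebra
structure of A given via ε is encoded by `[Algebra B A]` together with
`[IsScalarTower k B A]` (so that ε = algebraMap B A is a k-algebra map).  The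
coefficient bimodule is A itself; since A is commutative, ∂₁ = 0 and
H₁((A,B,ε);A) = (A⊗A)/im ∂₂.
-/

open TensorProduct MulOpposite

set_option maxSynthPendingDepth 8

theorem secondaryHochschild_H1_self_iso_kaehler
    (k : Type*) [CommRing k]
    (B : Type*) [CommRing B] [Algebra k B]
    (A : Type*) [CommRing A] [Algebra k A] [Algebra B A] [IsScalarTower k B A]
    -- the secondary Hochschild differentials ∂₁, ∂₂ of (A,B,ε) with coefficients in A
    (p1 : A ⊗[k] A →ₗ[k] A)
    (hp1 : ∀ (x a : A), p1 (x ⊗ₜ[k] a) = x * a - a * x)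
    (p2 : A ⊗[k] A ⊗[k] A ⊗[k] B →ₗ[k] A ⊗[k] A)
    (hp2 : ∀ (x a b : A) (α : B),
      p2 (x ⊗ₜ[k] a ⊗ₜ[k] b ⊗ₜ[k] α) =
        (x * a * algebraMap B A α) ⊗ₜ[k] b
        - x ⊗ₜ[k] (a * algebraMap B A α * b)
        + (b * algebraMap B A α * x) ⊗ₜ[k] a) :
    p1 = 0 ∧
    ∃ e : ((A ⊗[k] A) ⧸ LinearMap.range p2) ≃ₗ[k] Ω[A⁄B],
      ∀ (x a : A),
        e (Submodule.Quotient.mk (x ⊗ₜ[k] a)) = x • KaehlerDifferential.D B A a := by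
  constructor
  · apply TensorProduct.ext'
    intro x a
    simp [hp1, mul_comm]
  have hsmul : ∀ (c : A) (t : A ⊗[k] A ⊗[k] A ⊗[k] B), c • p2 t ∈ LinearMap.range p2 := by
    intro c t
    refine ⟨LinearMap.rTensor B (LinearMap.rTensor A (LinearMap.rTensor A (LinearMap.mulLeft k c))) t, ?_⟩
    have h : p2 ∘ₗ LinearMap.rTensor B (LinearMap.rTensor A (LinearMap.rTensor A (LinearMap.mulLeft k c)))
        = c • p2 := by
      ext x a b α
      simp only [LinearMap.compMultilinearMap_apply, LinearMap.coe_comp, Function.comp_apply,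
        LinearMap.rTensor_tmul, LinearMap.mulLeft_apply, LinearMap.smul_apply,
        TensorProduct.AlgebraTensorModule.curry_apply, TensorProduct.curry_apply,
        LinearMap.coe_restrictScalars, hp2, smul_sub, smul_add, smul_tmul', smul_eq_mul]
      ring_nf
    simpa using LinearMap.congr_fun h t
  set RA : Submodule A (A ⊗[k] A) :=
    { carrier := LinearMap.range p2
      add_mem' := fun h1 h2 => add_mem h1 h2
      zero_mem' := zero_mem _
      smul_mem' := by rintro c x ⟨t, rfl⟩; exact hsmul c t } with hRAdef
  have hRA : RA.restrictScalars k = LinearMap.range p2 := rfl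
  have key : ∀ (x a b : A) (α : B),
      ((x * a * algebraMap B A α) ⊗ₜ[k] b
        - x ⊗ₜ[k] (a * algebraMap B A α * b)
        + (b * algebraMap B A α * x) ⊗ₜ[k] a) ∈ RA := by
    intro x a b α
    exact ⟨x ⊗ₜ[k] a ⊗ₜ[k] b ⊗ₜ[k] α, hp2 x a b α⟩
  let der : Derivation B A ((A ⊗[k] A) ⧸ RA) :=
  { toFun := fun a => Submodule.Quotient.mk ((1 : A) ⊗ₜ[k] a)
    map_add' := by
      intro a b
      show Submodule.Quotient.mk ((1:A) ⊗ₜ[k] (a + b)) = Submodule.Quotient.mk ((1:A) ⊗ₜ[k] a) + Submodule.Quotient.mk ((1:A) ⊗ₜ[k] b)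
      rw [TensorProduct.tmul_add, Submodule.Quotient.mk_add]
    map_smul' := by
      intro b a
      rw [Algebra.smul_def, RingHom.id_apply, ← Submodule.Quotient.mk_smul,
        Submodule.Quotient.eq]
      have h1 := key (algebraMap B A b * a) 1 1 1
      have h2 := key 1 a 1 b
      simp only [map_one, mul_one, one_mul] at h1 h2
      have h3 := sub_mem h1 h2
      convert h3 using 1
      rw [smul_tmul', show b • (1:A) = algebraMap B A b from by rw [Algebra.smul_def, mul_one]]
      ring_nf
    map_one_eq_zero' := by
      simp only [LinearMap.coe_mk, AddHom.coe_mk]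
      have h := key 1 1 1 1
      simp only [map_one, mul_one, one_mul] at h
      rw [Submodule.Quotient.mk_eq_zero]
      simpa using h
    leibniz' := by
      intro a b
      simp only [LinearMap.coe_mk, AddHom.coe_mk]
      have h := key 1 a b 1
      simp only [map_one, mul_one, one_mul] at h
      rw [← Submodule.Quotient.mk_smul, ← Submodule.Quotient.mk_smul,
        ← Submodule.Quotient.mk_add, Submodule.Quotient.eq]
      convert neg_mem h using 1
      rw [smul_tmul', smul_tmul', smul_eq_mul, smul_eq_mul]
      ring_nf }
  -- forward map: A-linear on the left factor
  let DkLin : A →ₗ[k] Ω[A⁄B] :=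
    LinearMap.restrictScalars k (KaehlerDifferential.D B A).toLinearMap
  let m : A →ₗ[A] (A →ₗ[k] Ω[A⁄B]) :=
  { toFun := fun x => x • DkLin
    map_add' := by intro x y; rw [add_smul]
    map_smul' := by intro c x; rw [RingHom.id_apply, smul_assoc] }
  let f0 : A ⊗[k] A →ₗ[A] Ω[A⁄B] := TensorProduct.AlgebraTensorModule.lift m
  have hf0 : ∀ (x a : A), f0 (x ⊗ₜ[k] a) = x • KaehlerDifferential.D B A a := by
    intro x a; rfl
  have hker : RA ≤ LinearMap.ker f0 := by
    rintro y ⟨t, rfl⟩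
    have h : (LinearMap.restrictScalars k f0) ∘ₗ p2 = 0 := by
      ext x a b α
      simp only [LinearMap.compMultilinearMap_apply, LinearMap.coe_comp, Function.comp_apply,
        LinearMap.coe_restrictScalars, hp2, map_sub, map_add, LinearMap.zero_apply,
        TensorProduct.AlgebraTensorModule.curry_apply, TensorProduct.curry_apply, hf0]
      rw [show a * algebraMap B A α * b = (algebraMap B A α * a) * b by ring]
      rw [Derivation.leibniz, Derivation.leibniz, Derivation.map_algebraMap]
      simp only [smul_add, smul_smul, smul_zero, add_zero, zero_add]
      module
    simpa using LinearMap.congr_fun h t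
  let f : ((A ⊗[k] A) ⧸ RA) →ₗ[A] Ω[A⁄B] := Submodule.liftQ RA f0 hker
  let g : Ω[A⁄B] →ₗ[A] ((A ⊗[k] A) ⧸ RA) := der.liftKaehlerDifferential
  have hfg : f ∘ₗ g = LinearMap.id := by
    refine Derivation.liftKaehlerDifferential_unique (R := B) (S := A) (M := Ω[A⁄B]) (f ∘ₗ g) LinearMap.id ?_
    apply Derivation.ext
    intro a
    show f (g (KaehlerDifferential.D B A a)) = (LinearMap.id (R := A) (M := Ω[A⁄B])) (KaehlerDifferential.D B A a)
    rw [show g (KaehlerDifferential.D B A a) = der a from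
      Derivation.liftKaehlerDifferential_comp_D der a, LinearMap.id_apply]
    show f0 ((1:A) ⊗ₜ[k] a) = KaehlerDifferential.D B A a
    rw [hf0, one_smul]
  have hgf : g ∘ₗ f = LinearMap.id := by
    apply Submodule.linearMap_qext
    apply TensorProduct.AlgebraTensorModule.ext
    intro x a
    simp only [LinearMap.coe_comp, Function.comp_apply, Submodule.mkQ_apply,
      LinearMap.id_coe, id_eq]
    rw [show f (Submodule.Quotient.mk (x ⊗ₜ[k] a)) = f0 (x ⊗ₜ[k] a) from rfl, hf0, map_smul]
    rw [show g (KaehlerDifferential.D B A a) = der a from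
      Derivation.liftKaehlerDifferential_comp_D der a]
    show x • (Submodule.Quotient.mk ((1:A) ⊗ₜ[k] a) : (A ⊗[k] A) ⧸ RA) = _
    rw [← Submodule.Quotient.mk_smul, smul_tmul', smul_eq_mul, mul_one]
  let e' : ((A ⊗[k] A) ⧸ RA) ≃ₗ[A] Ω[A⁄B] := LinearEquiv.ofLinear f g hfg hgf
  let e : ((A ⊗[k] A) ⧸ LinearMap.range p2) ≃ₗ[k] Ω[A⁄B] :=
    (Submodule.quotEquivOfEq _ _ hRA.symm) ≪≫ₗ
      (Submodule.Quotient.restrictScalarsEquiv k RA) ≪≫ₗ (e'.restrictScalars k)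
  refine ⟨e, fun x a => ?_⟩
  show (e'.restrictScalars k) ((Submodule.Quotient.restrictScalarsEquiv k RA)
      ((Submodule.quotEquivOfEq _ _ hRA.symm) (Submodule.Quotient.mk (x ⊗ₜ[k] a))))
    = x • KaehlerDifferential.D B A a
  rw [Submodule.quotEquivOfEq_mk, Submodule.Quotient.restrictScalarsEquiv_mk]
  show f0 (x ⊗ₜ[k] a) = x • KaehlerDifferential.D B A a
  exact hf0 x a
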